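/- Let k > 0, γ > 0, t ≥ 0, and let X₀ and Z be independent real-valued random variables on a probability space, with X₀ distributed as gaussianReal 0 (γ²/(2k)) and Z distributed as gaussianReal 0 (γ²·(1 - exp(-2·k·t))/(2k)). Then for every natural number n, E[((exp(-k·t) - 1)·X₀ + Z)^(2n)] = (2n - 1)‼ · (γ²·(1 - exp(-k·t))/k)ⁿ. -/

import Mathlib

open ProbabilityTheory MeasureTheory Nat Real Set
open scoped NNReal ENNReal


lemma myGamma_nat_add_half (n : ℕ) :
    Real.Gamma (n + 1/2) = Real.sqrt π * (2*n-1)‼ / 2^n := by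
  induction n with
  | zero => norm_num [Real.Gamma_one_half_eq]
  | succ m ih =>
      have h : ((m+1 : ℕ) : ℝ) + 1/2 = (m + 1/2) + 1 := by push_cast; ring
      rw [h, Real.Gamma_add_one (by positivity), ih]
      have h2 : 2*(m+1) - 1 = 2*m + 1 := by omega
      rw [h2, Nat.doubleFactorial_add_one]
      have h3 : 2*m + 1 - 1 = 2*m := by omega
      have h4 : 2*m - 1 ≤ 2 * m := by omega
      push_cast [h3]
      field_simp
      ring

lemma myIntegrable_pow_mul_exp {b : ℝ} (hb : 0 < b) (m : ℕ) :
    Integrable (fun x : ℝ => x ^ m * Real.exp (-b * x^2)) := by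
  have := integrable_rpow_mul_exp_neg_mul_sq hb (s := (m:ℝ)) (by exact_mod_cast neg_one_lt_zero.trans_le (by exact_mod_cast Nat.cast_nonneg m))
  simpa [Real.rpow_natCast] using this

lemma myIntegral_even_pow_mul_exp {b : ℝ} (hb : 0 < b) (n : ℕ) :
    ∫ x : ℝ, x ^ (2*n) * Real.exp (-b * x^2)
      = Real.sqrt π * (2*n-1)‼ / 2^n * b ^ (-(2*(n:ℝ)+1)/2) := by
  have h1 : ∫ x : ℝ, x ^ (2*n) * Real.exp (-b*x^2)
      = 2 * ∫ x in Ioi (0:ℝ), x ^ (2*n) * Real.exp (-b*x^2) := by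
    rw [← integral_comp_abs (f := fun x => x ^ (2*n) * Real.exp (-b*x^2))]
    congr 1 with x
    rw [(even_two_mul n).pow_abs, sq_abs]
  have h2 : ∫ x in Ioi (0:ℝ), x ^ (2*n) * Real.exp (-b*x^2)
      = b ^ (-((2*(n:ℝ))+1)/2) * (1/2) * Real.Gamma (((2*(n:ℝ))+1)/2) := by
    rw [← integral_rpow_mul_exp_neg_mul_rpow (p := 2) (q := 2*(n:ℝ)) two_pos
      (by have := Nat.cast_nonneg (α := ℝ) n; linarith) hb]
    refine setIntegral_congr_fun measurableSet_Ioi (fun x hx => ?_)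
    rw [show ((2:ℝ)*n) = ((2*n : ℕ) : ℝ) by push_cast; ring, Real.rpow_natCast,
      Real.rpow_two]
  rw [h1, h2]
  have h3 : ((2*(n:ℝ))+1)/2 = (n:ℝ) + 1/2 := by ring
  rw [h3, myGamma_nat_add_half]
  ring

lemma myIntegral_odd_pow_mul_exp {b : ℝ} (hb : 0 < b) (n : ℕ) :
    ∫ x : ℝ, x ^ (2*n+1) * Real.exp (-b * x^2) = 0 := by
  have A := MeasureTheory.integral_neg_eq_self
      (fun y : ℝ => y ^ (2*n+1) * Real.exp (-b * y^2)) (volume : Measure ℝ)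
  simp only [Odd.neg_pow (odd_two_mul_add_one n), neg_sq, neg_mul] at A
  rw [integral_neg] at A
  simp only [neg_mul]
  linarith

lemma gaussianPDFReal_eq (v : ℝ≥0) (x : ℝ) :
    gaussianPDFReal 0 v x = (Real.sqrt (2 * π * v))⁻¹ * Real.exp (-(2 * (v:ℝ))⁻¹ * x ^ 2) := by
  rw [gaussianPDFReal]
  congr 1
  rw [sub_zero, neg_div, div_eq_inv_mul, neg_mul]

lemma myIntegrable_pow_gaussianReal (v : ℝ≥0) (m : ℕ) :
    Integrable (fun x : ℝ => x ^ m) (gaussianReal 0 v) := by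
  by_cases hv : v = 0
  · simp only [hv, gaussianReal_zero_var]
    refine (integrable_const ((0:ℝ) ^ m)).congr ?_
    rw [MeasureTheory.ae_dirac_eq]
    exact Filter.eventually_pure.2 rfl
  · have hv' : 0 < (v:ℝ) := by positivity
    rw [gaussianReal_of_var_ne_zero 0 hv, gaussianPDF_def]
    have : (fun x => ENNReal.ofReal (gaussianPDFReal 0 v x))
        = fun x => ((gaussianPDFReal 0 v x).toNNReal : ℝ≥0∞) := rfl
    rw [this, integrable_withDensity_iff_integrable_smul
      (measurable_gaussianPDFReal 0 v).real_toNNReal]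
    have hb : 0 < (2 * (v:ℝ))⁻¹ := by positivity
    have := ((myIntegrable_pow_mul_exp hb m).const_mul (Real.sqrt (2 * π * v))⁻¹)
    refine this.congr (Filter.Eventually.of_forall fun x => ?_)
    simp only [NNReal.smul_def, smul_eq_mul,
      Real.coe_toNNReal _ (gaussianPDFReal_nonneg 0 v x)]
    rw [gaussianPDFReal_eq]
    ring


lemma myIntegral_pow_gaussianReal_of_ne (v : ℝ≥0) (hv : v ≠ 0) (m : ℕ) :
    ∫ x, x ^ m ∂(gaussianReal 0 v)
      = (Real.sqrt (2 * π * v))⁻¹ * ∫ x : ℝ, x ^ m * Real.exp (-(2 * (v:ℝ))⁻¹ * x^2) := by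
  rw [gaussianReal_of_var_ne_zero 0 hv, gaussianPDF_def]
  have h : (fun x => ENNReal.ofReal (gaussianPDFReal 0 v x))
      = fun x => ((gaussianPDFReal 0 v x).toNNReal : ℝ≥0∞) := rfl
  rw [h, integral_withDensity_eq_integral_smul
    (measurable_gaussianPDFReal 0 v).real_toNNReal (fun x => x ^ m), ← integral_const_mul]
  congr 1 with x
  simp only [NNReal.smul_def, smul_eq_mul,
    Real.coe_toNNReal _ (gaussianPDFReal_nonneg 0 v x)]
  rw [gaussianPDFReal_eq]
  ring

lemma myIntegral_even_pow_gaussianReal (v : ℝ≥0) (n : ℕ) :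
    ∫ x, x ^ (2*n) ∂(gaussianReal 0 v) = (2*n-1)‼ * (v:ℝ)^n := by
  by_cases hv : v = 0
  · subst hv
    rw [gaussianReal_zero_var, integral_dirac]
    cases n with
    | zero => simp
    | succ m => simp [pow_succ]
  · have h2v : (0:ℝ) < 2 * v := by positivity
    have hb : (0:ℝ) < (2 * (v:ℝ))⁻¹ := by positivity
    rw [myIntegral_pow_gaussianReal_of_ne v hv, myIntegral_even_pow_mul_exp hb n]
    have h1 : ((2*(v:ℝ))⁻¹) ^ (-(2*(n:ℝ)+1)/2) = (2*(v:ℝ)) ^ ((2*(n:ℝ)+1)/2) := by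
      rw [Real.inv_rpow h2v.le, ← Real.rpow_neg h2v.le]
      congr 1; ring
    have h2 : (2*(v:ℝ)) ^ ((2*(n:ℝ)+1)/2) = (2*(v:ℝ))^n * Real.sqrt (2*(v:ℝ)) := by
      rw [show (2*(n:ℝ)+1)/2 = (n:ℝ) + 1/2 by ring, Real.rpow_add h2v,
        Real.rpow_natCast, ← Real.sqrt_eq_rpow]
    have h3 : Real.sqrt (2 * π * v) = Real.sqrt π * Real.sqrt (2*(v:ℝ)) := by
      rw [show 2*π*(v:ℝ) = π * (2*(v:ℝ)) by ring, Real.sqrt_mul pi_pos.le]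
    rw [h1, h2, h3, mul_pow]
    have hsp : (0:ℝ) < Real.sqrt π := Real.sqrt_pos.mpr pi_pos
    have hs2v : (0:ℝ) < Real.sqrt (2*(v:ℝ)) := Real.sqrt_pos.mpr h2v
    field_simp

lemma myIntegral_odd_pow_gaussianReal (v : ℝ≥0) (n : ℕ) :
    ∫ x, x ^ (2*n+1) ∂(gaussianReal 0 v) = 0 := by
  by_cases hv : v = 0
  · subst hv
    rw [gaussianReal_zero_var, integral_dirac]
    simp
  · have hb : (0:ℝ) < (2 * (v:ℝ))⁻¹ := by positivity
    rw [myIntegral_pow_gaussianReal_of_ne v hv, myIntegral_odd_pow_mul_exp hb n, mul_zero]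

lemma rv_integrable {Ω : Type*} [MeasureSpace Ω] {X : Ω → ℝ} {v : ℝ≥0}
    (hm : Measurable X) (hX : Measure.map X ℙ = gaussianReal 0 v) (m : ℕ) :
    Integrable (fun ω => X ω ^ m) ℙ := by
  have h : Integrable (fun x : ℝ => x ^ m) (Measure.map X ℙ) := by
    rw [hX]; exact myIntegrable_pow_gaussianReal v m
  have hgm : Measurable fun x : ℝ => x ^ m := by exact measurable_id.pow_const m
  exact (integrable_map_measure hgm.aestronglyMeasurable hm.aemeasurable).mp h

lemma rv_moment {Ω : Type*} [MeasureSpace Ω] {X : Ω → ℝ} {v : ℝ≥0}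
    (hm : Measurable X) (hX : Measure.map X ℙ = gaussianReal 0 v) (m : ℕ) :
    ∫ ω, X ω ^ m ∂ℙ = ∫ x, x ^ m ∂(gaussianReal 0 v) := by
  have hgm : Measurable fun x : ℝ => x ^ m := by exact measurable_id.pow_const m
  rw [← hX]
  exact (integral_map hm.aemeasurable hgm.aestronglyMeasurable).symm


lemma myF (m : ℕ) : 2^m * m ! * (2*m-1)‼ = (2*m)! := by
  cases m with
  | zero => rfl
  | succ k =>
      have h1 : (2*(k+1))! = (2*(k+1))‼ * (2*k+1)‼ := by
        rw [show 2*(k+1) = (2*k+1)+1 from by ring]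
        exact Nat.factorial_eq_mul_doubleFactorial _
      rw [show 2*(k+1)-1 = 2*k+1 from by omega, h1, Nat.doubleFactorial_two_mul]

lemma myD (m : ℕ) : ((2*m-1)‼ : ℝ) = (2*m)! / (2^m * m !) := by
  rw [eq_div_iff (by positivity)]
  exact_mod_cast congrArg (Nat.cast (R := ℝ)) ((mul_comm _ _).trans (myF m))

lemma myKeyR (n i : ℕ) (h : i ≤ n) :
    (((2*n).choose (2*i) : ℝ)) * ((2*i-1)‼ : ℝ) * ((2*(n-i)-1)‼ : ℝ)
      = ((2*n-1)‼ : ℝ) * (n.choose i : ℝ) := by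
  have h2 : 2*i ≤ 2*n := by omega
  rw [myD i, myD (n-i), myD n, Nat.cast_choose ℝ h2, Nat.cast_choose ℝ h,
    show 2*n - 2*i = 2*(n-i) from by omega,
    show (2:ℝ)^n = 2^i * 2^(n-i) from by rw [← pow_add]; congr 1; omega]
  have h3 : (0:ℝ) < (2*i)! := by positivity
  have h4 : (0:ℝ) < (2*(n-i))! := by positivity
  field_simp

lemma mySum_range_two_mul (f : ℕ → ℝ) (m : ℕ) :
    ∑ j ∈ Finset.range (2*m), f j = ∑ i ∈ Finset.range m, (f (2*i) + f (2*i+1)) := by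
  induction m with
  | zero => simp
  | succ p ih =>
      rw [show 2*(p+1) = 2*p+1+1 from by ring, Finset.sum_range_succ,
        Finset.sum_range_succ, ih, Finset.sum_range_succ,
        show 2*p+1 = 2*p+1 from rfl]
      ring

lemma gaussian_add_even_moment {Ω : Type*} [MeasureSpace Ω]
    [IsProbabilityMeasure (ℙ : Measure Ω)]
    (a b : ℝ≥0) (X Z : Ω → ℝ) (hmX : Measurable X) (hmZ : Measurable Z)
    (hindep : IndepFun X Z ℙ) (hX : Measure.map X ℙ = gaussianReal 0 a)
    (hZ : Measure.map Z ℙ = gaussianReal 0 b) (n : ℕ) :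
    ∫ ω, (X ω + Z ω) ^ (2*n) ∂ℙ = ((2*n-1)‼ : ℝ) * ((a:ℝ) + (b:ℝ))^n := by
  -- moments of the two marginals
  set Mx : ℕ → ℝ := fun m => ∫ x, x ^ m ∂(gaussianReal 0 a) with hMx
  set Mz : ℕ → ℝ := fun m => ∫ x, x ^ m ∂(gaussianReal 0 b) with hMz
  -- independence of powers
  have hindep' : ∀ j m : ℕ, IndepFun (fun ω => X ω ^ j) (fun ω => Z ω ^ m) ℙ := by
    intro j m
    exact hindep.comp (measurable_id.pow_const j) (measurable_id.pow_const m)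
  have hint : ∀ j m : ℕ, Integrable (fun ω => X ω ^ j * Z ω ^ m) ℙ := fun j m =>
    (hindep' j m).integrable_mul (rv_integrable hmX hX j) (rv_integrable hmZ hZ m)
  have hprod : ∀ j m : ℕ, ∫ ω, X ω ^ j * Z ω ^ m ∂ℙ = Mx j * Mz m := by
    intro j m
    rw [(hindep' j m).integral_fun_mul_eq_mul_integral (rv_integrable hmX hX j).aestronglyMeasurable
      (rv_integrable hmZ hZ m).aestronglyMeasurable]
    rw [rv_moment hmX hX j, rv_moment hmZ hZ m]
  -- binomial expansion
  have hpt : ∀ ω, (X ω + Z ω) ^ (2*n)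
      = ∑ j ∈ Finset.range (2*n+1), X ω ^ j * Z ω ^ (2*n-j) * ((2*n).choose j : ℝ) := by
    intro ω; exact add_pow _ _ _
  rw [integral_congr_ae (Filter.Eventually.of_forall hpt)]
  rw [integral_finset_sum _ (fun j _ => (hint j (2*n-j)).mul_const _)]
  have hterm : ∀ j, ∫ ω, X ω ^ j * Z ω ^ (2*n-j) * ((2*n).choose j : ℝ) ∂ℙ
      = Mx j * Mz (2*n-j) * ((2*n).choose j : ℝ) := by
    intro j
    rw [integral_mul_const, hprod]
  simp_rw [hterm]
  -- kill odd terms and reindex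
  set g : ℕ → ℝ := fun j => Mx j * Mz (2*n-j) * ((2*n).choose j : ℝ) with hg
  have hModd : ∀ m : ℕ, ¬ Even m → Mx m = 0 ∧ Mz m = 0 := by
    intro m hm
    obtain ⟨p, hp⟩ := Nat.odd_iff.mpr (Nat.not_even_iff.mp hm)
    constructor
    · rw [hMx]; simp only; rw [hp]; exact myIntegral_odd_pow_gaussianReal a p
    · rw [hMz]; simp only; rw [hp]; exact myIntegral_odd_pow_gaussianReal b p
  have hgodd : ∀ i : ℕ, g (2*i+1) = 0 := by
    intro i
    have := (hModd (2*i+1) (by simp [Nat.even_iff, Nat.add_mod])).1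
    rw [hg]; simp only; rw [this, zero_mul, zero_mul]
  have hsum : ∑ j ∈ Finset.range (2*n+1), g j = ∑ i ∈ Finset.range (n+1), g (2*i) := by
    have h1 : ∑ j ∈ Finset.range (2*(n+1)), g j
        = ∑ j ∈ Finset.range (2*n+1), g j + g (2*n+1) := by
      rw [show 2*(n+1) = (2*n+1)+1 from by ring, Finset.sum_range_succ]
    have h2 := mySum_range_two_mul g (n+1)
    rw [h1, hgodd n] at h2
    simp_rw [hgodd] at h2
    simpa using h2
  rw [hsum]
  have hgeven : ∀ i ∈ Finset.range (n+1),
      g (2*i) = ((2*n-1)‼ : ℝ) * ((n.choose i : ℝ) * (a:ℝ)^i * (b:ℝ)^(n-i)) := by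
    intro i hi
    have hin : i ≤ n := Nat.lt_succ_iff.mp (Finset.mem_range.mp hi)
    have e1 : Mx (2*i) = ((2*i-1)‼ : ℝ) * (a:ℝ)^i := myIntegral_even_pow_gaussianReal a i
    have e2 : Mz (2*n - 2*i) = ((2*(n-i)-1)‼ : ℝ) * (b:ℝ)^(n-i) := by
      rw [show 2*n - 2*i = 2*(n-i) from by omega]
      exact myIntegral_even_pow_gaussianReal b (n-i)
    rw [hg]; simp only
    rw [e1, e2]
    linear_combination ((a:ℝ)^i * (b:ℝ)^(n-i)) * myKeyR n i hin
  rw [Finset.sum_congr rfl hgeven, ← Finset.mul_sum]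
  congr 1
  rw [add_pow]
  refine Finset.sum_congr rfl (fun i hi => ?_)
  ring

theorem OU_increment_even_moments_stationary
    (k γ t : ℝ) (hk : 0 < k) (hγ : 0 < γ) (ht : 0 ≤ t)
    {Ω : Type*} [MeasureSpace Ω] [IsProbabilityMeasure (ℙ : Measure Ω)]
    (X₀ Z : Ω → ℝ)
    (hmX₀ : Measurable X₀) (hmZ : Measurable Z)
    (hindep : IndepFun X₀ Z ℙ)
    (hX₀ : Measure.map X₀ ℙ = gaussianReal 0 (Real.toNNReal (γ ^ 2 / (2 * k))))
    (hZ : Measure.map Z ℙ =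
      gaussianReal 0 (Real.toNNReal (γ ^ 2 * (1 - Real.exp (-2 * k * t)) / (2 * k))))
    (n : ℕ) :
    ∫ ω, ((Real.exp (-k * t) - 1) * X₀ ω + Z ω) ^ (2 * n) ∂ℙ =
      ((2 * n - 1)‼ : ℝ) * (γ ^ 2 * (1 - Real.exp (-k * t)) / k) ^ n := by
  set c : ℝ := Real.exp (-k * t) - 1 with hc
  set v₁ := Real.toNNReal (γ ^ 2 / (2 * k)) with hv₁
  set v₂ := Real.toNNReal (γ ^ 2 * (1 - Real.exp (-2 * k * t)) / (2 * k)) with hv₂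
  have hE1 : Real.exp (-k * t) ≤ 1 := Real.exp_le_one_iff.mpr (by nlinarith)
  have hE2 : Real.exp (-2 * k * t) ≤ 1 := Real.exp_le_one_iff.mpr (by nlinarith)
  have hY : Measure.map (fun ω => c * X₀ ω) ℙ
      = gaussianReal 0 (NNReal.mk (c^2) (sq_nonneg c) * v₁) := by
    have h0 : (fun ω => c * X₀ ω) = (fun x : ℝ => c * x) ∘ X₀ := rfl
    rw [h0, ← Measure.map_map (measurable_const_mul c) hmX₀, hX₀]
    have := gaussianReal_map_const_mul (μ := 0) (v := v₁) c
    simpa using this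
  have hYm : Measurable fun ω => c * X₀ ω := hmX₀.const_mul c
  have hYindep : IndepFun (fun ω => c * X₀ ω) Z ℙ :=
    hindep.comp (measurable_id.const_mul c) measurable_id
  have key := gaussian_add_even_moment (NNReal.mk (c^2) (sq_nonneg c) * v₁) v₂ _ Z hYm hmZ
    hYindep hY hZ n
  rw [key]
  congr 2
  have coe1 : ((v₁ : ℝ≥0) : ℝ) = γ ^ 2 / (2 * k) :=
    Real.coe_toNNReal _ (by positivity)
  have coe2 : ((v₂ : ℝ≥0) : ℝ) = γ ^ 2 * (1 - Real.exp (-2 * k * t)) / (2 * k) :=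
    Real.coe_toNNReal _ (div_nonneg (mul_nonneg (by positivity) (by linarith)) (by linarith))
  have hsq : Real.exp (-2 * k * t) = Real.exp (-k * t) ^ 2 := by
    rw [sq, ← Real.exp_add]; ring_nf
  rw [NNReal.coe_mul, coe1, coe2]
  simp only [NNReal.coe_mk]
  rw [hc, hsq]
  field_simp
  ring
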